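/- The bijection T : G → G is non-singular: for every measurable set A ⊆ G, μ(A) = 0 if and only if μ(T(A)) = 0 (equivalently, both T and its inverse on G map null sets to null sets). -/

import Mathlib

open MeasureTheory ENNReal Filter

/-- The coordinate space: Lean index `n` is paper index `n+1`, so this is
`X_{n+1} = {0,1,…,5^{n+1}}`. -/
abbrev Xc (n : ℕ) : Type := Fin (5 ^ (n + 1) + 1)

/-- The weight of a point of `X_{n+1}`: `μ_{n+1}(0) = 1/2`, `μ_{n+1}(i) = 1/(2·5^{n+1})`
for `i ≠ 0`. -/
noncomputable def w (n : ℕ) (a : Xc n) : ℝ≥0∞ :=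
  if a = 0 then 1 / 2 else 1 / (2 * 5 ^ (n + 1))

/-- The full product space `X = ∏_{n ≥ 1} X_n`. -/
abbrev XX : Type := (n : ℕ) → Xc n

/-- The cylinder `Z_A` determined by a set `A` of configurations on a finite set `Γ`
of coordinates. -/
def cylSet (Γ : Finset ℕ) (A : Set ((i : Γ) → Xc i)) : Set XX :=
  {x | (fun i : Γ => x i) ∈ A}

/-- The point cylinder `Z_u`. -/
def cylPt (Γ : Finset ℕ) (u : (i : Γ) → Xc i) : Set XX := cylSet Γ {u}

/-- `μ` is the product measure `⊗ μ_n` iff every point cylinder gets the product of the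
weights of its coordinates. (This property determines the product measure uniquely.) -/
def IsProductMeasure (μ : Measure XX) : Prop :=
  ∀ (Γ : Finset ℕ) (u : (i : Γ) → Xc i), μ (cylPt Γ u) = ∏ i : Γ, w i (u i)

/-- `π_{n+1} : X_{n+1} → {0,1}`, sending `0` to `0` and everything else to `1`. -/
def par (n : ℕ) (a : Xc n) : ℕ := if a = 0 then 0 else 1

/-- The equivalence relation `R`: `x R y` iff for some `n ≥ 1` the coordinates of `x` and `y`
beyond the `n`-th agree, and the parities of `∑_{i=1}^{n} π_i(x_i)` and
`∑_{i=1}^{n} π_i(y_i)` coincide. -/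
def Rrel (x y : XX) : Prop :=
  ∃ n : ℕ, 1 ≤ n ∧ (∀ i, n ≤ i → x i = y i) ∧
    (∑ i ∈ Finset.range n, par i (x i)) % 2 = (∑ i ∈ Finset.range n, par i (y i)) % 2

/-- The conull set `G` of points with infinitely many non-maximal and infinitely many
non-zero coordinates of (paper) index `≥ 2` (Lean index `≥ 1`). -/
def G : Set XX :=
  {x | {i : ℕ | 1 ≤ i ∧ (x i : ℕ) < 5 ^ (i + 1)}.Infinite ∧
    {i : ℕ | 1 ≤ i ∧ x i ≠ 0}.Infinite}

open Classical in
/-- The transformation `T`. If `x_1 ∈ {1,2,3,4}` (Lean coordinate `0`), it increments the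
first coordinate. Otherwise (`x_1 ∈ {0,5}`), with `N(x)` the least (paper) index `≥ 2` with
`x_{N(x)} < 5^{N(x)}`, it sets the first coordinate to `a_x`, the coordinates strictly between
`1` and `N(x)` to `0`, increments the `N(x)`-th coordinate, and keeps the rest; here
`a_x ∈ {0,1}` has the parity of `π_1(x_1) + ⋯ + π_{N(x)}(x_{N(x)}) - 1`. On points where no
such `N(x)` exists (a null set), `T` is defined to be the identity. -/
noncomputable def T (x : XX) : XX :=
  if 1 ≤ (x 0 : ℕ) ∧ (x 0 : ℕ) ≤ 4 then
    Function.update x 0 (x 0 + 1)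
  else if h : ∃ i, 1 ≤ i ∧ (x i : ℕ) < 5 ^ (i + 1) then
    fun i =>
      if i = 0 then
        (⟨((∑ j ∈ Finset.range (Nat.find h + 1), par j (x j)) + 1) % 2, by
          have h2 : ((∑ j ∈ Finset.range (Nat.find h + 1), par j (x j)) + 1) % 2 < 2 :=
            Nat.mod_lt _ (by norm_num)
          have h3 : 1 ≤ 5 ^ (i + 1) := Nat.one_le_pow _ _ (by norm_num)
          omega⟩ : Xc i)
      else if i < Nat.find h then 0
      else if hiN : i = Nat.find h then
        cast (congrArg Xc hiN).symm (x (Nat.find h) + 1)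
      else x i
  else x


lemma w_ne_zero (n : ℕ) (a : Xc n) : w n a ≠ 0 := by
  unfold w; split
  · simp
  · rw [one_div]
    exact ENNReal.inv_ne_zero.mpr (ENNReal.mul_ne_top (by simp) (ENNReal.pow_ne_top (by simp)))

lemma w_ne_top (n : ℕ) (a : Xc n) : w n a ≠ ∞ := by
  unfold w; split
  · simp
  · rw [one_div]
    exact ENNReal.inv_ne_top.mpr (mul_ne_zero (by simp) (pow_ne_zero _ (by simp)))

lemma W_ne_zero (Γ : Finset ℕ) (z : XX) : ∏ i ∈ Γ, w i (z i) ≠ 0 :=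
  Finset.prod_ne_zero_iff.mpr fun i _ => w_ne_zero i (z i)

lemma W_ne_top (Γ : Finset ℕ) (z : XX) : ∏ i ∈ Γ, w i (z i) ≠ ∞ :=
  ENNReal.prod_ne_top fun i _ => w_ne_top i (z i)

def cylE (Γ : Finset ℕ) (z : XX) : Set XX := {y | ∀ i ∈ Γ, y i = z i}

lemma meas_cylE {μ : Measure XX} (hμ : IsProductMeasure μ) (Γ : Finset ℕ) (z : XX) :
    μ (cylE Γ z) = ∏ i ∈ Γ, w i (z i) := by
  have h1 : cylE Γ z = cylPt Γ (fun i => z i) := by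
    ext x
    simp only [cylE, cylPt, cylSet, Set.mem_setOf_eq, Set.mem_singleton_iff, funext_iff,
      Subtype.forall, Set.mem_setOf_eq]
  rw [h1, hμ, ← Finset.prod_coe_sort Γ (fun i => w i (z i))]

lemma measurableSet_cylE (Γ : Finset ℕ) (z : XX) : MeasurableSet (cylE Γ z) := by
  have : cylE Γ z = ⋂ i ∈ Γ, (fun x : XX => x i) ⁻¹' {z i} := by
    ext x; simp [cylE]
  rw [this]
  exact MeasurableSet.biInter Γ.countable_toSet fun i _ =>
    (measurable_pi_apply i) (measurableSet_singleton _)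

noncomputable def replE (Γ : Finset ℕ) (z : XX) (x : XX) : XX :=
  fun i => if i ∈ Γ then z i else x i

lemma measurable_replE (Γ : Finset ℕ) (z : XX) : Measurable (replE Γ z) := by
  apply measurable_pi_lambda
  intro i
  by_cases h : i ∈ Γ <;> simp only [replE, h, if_true, if_false]
  · exact measurable_const
  · exact measurable_pi_apply i

def cylFam : Set (Set XX) := {S | ∃ Γ z, S = cylE Γ z}

lemma isPiSystem_cylFam : IsPiSystem cylFam := by
  rintro _ ⟨Γ, z, rfl⟩ _ ⟨Δ, y, rfl⟩ hne
  obtain ⟨x, hx1, hx2⟩ := hne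
  refine ⟨Γ ∪ Δ, x, ?_⟩
  ext t
  simp only [Set.mem_inter_iff, cylE, Set.mem_setOf_eq, Finset.mem_union]
  constructor
  · rintro ⟨h1, h2⟩ i hi
    rcases hi with hi | hi
    · rw [h1 i hi, ← hx1 i hi]
    · rw [h2 i hi, ← hx2 i hi]
  · intro h
    constructor
    · intro i hi; rw [h i (Or.inl hi), hx1 i hi]
    · intro i hi; rw [h i (Or.inr hi), hx2 i hi]

lemma generate_cylFam : (MeasurableSpace.pi : MeasurableSpace XX) = .generateFrom cylFam := by
  refine le_antisymm ?_ (MeasurableSpace.generateFrom_le ?_)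
  · refine iSup_le fun i => ?_
    rw [← measurable_iff_comap_le]
    refine @measurable_to_countable' (Xc i) XX _ _ (.generateFrom cylFam) _ fun a => ?_
    have : (fun x : XX => x i) ⁻¹' {a} = cylE {i} (Function.update (fun j => (0 : Xc j)) i a) := by
      ext x; simp [cylE]
    rw [this]
    exact MeasurableSpace.measurableSet_generateFrom ⟨_, _, rfl⟩
  · rintro _ ⟨Γ, z, rfl⟩
    exact measurableSet_cylE Γ z

lemma isFinite_of_product {μ : Measure XX} (hμ : IsProductMeasure μ) : IsFiniteMeasure μ := by
  constructor
  have h1 : (Set.univ : Set XX) = cylE ∅ (fun i => 0) := by ext x; simp [cylE]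
  rw [h1, meas_cylE hμ]
  simp

lemma image_replE (Γ : Finset ℕ) (z z' : XX) (B : Set XX) (hBz : B ⊆ cylE Γ z) :
    replE Γ z' '' B = replE Γ z ⁻¹' B ∩ cylE Γ z' := by
  ext y
  constructor
  · rintro ⟨x, hx, rfl⟩
    constructor
    · have : replE Γ z (replE Γ z' x) = x := by
        funext i
        by_cases h : i ∈ Γ <;> simp only [replE, h, if_true, if_false]
        exact (hBz hx i h).symm
      rw [Set.mem_preimage, this]; exact hx
    · intro i hi; simp [replE, hi]
  · rintro ⟨hy1, hy2⟩
    refine ⟨replE Γ z y, hy1, ?_⟩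
    funext i
    by_cases h : i ∈ Γ <;> simp only [replE, h, if_true, if_false]
    exact (hy2 i h).symm

lemma key_map {μ : Measure XX} (hμ : IsProductMeasure μ) (Γ : Finset ℕ) (z z' : XX) :
    (μ.restrict (cylE Γ z')).map (replE Γ z)
      = ((∏ i ∈ Γ, w i (z' i)) * (∏ i ∈ Γ, w i (z i))⁻¹) • (μ.restrict (cylE Γ z)) := by
  haveI : IsFiniteMeasure μ := isFinite_of_product hμ
  haveI : IsFiniteMeasure ((μ.restrict (cylE Γ z')).map (replE Γ z)) :=
    Measure.isFiniteMeasure_map _ _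
  set c : ℝ≥0∞ := (∏ i ∈ Γ, w i (z' i)) * (∏ i ∈ Γ, w i (z i))⁻¹ with hc
  have hcancel : c * (∏ i ∈ Γ, w i (z i)) = ∏ i ∈ Γ, w i (z' i) := by
    rw [hc, mul_assoc, ENNReal.inv_mul_cancel (W_ne_zero Γ z) (W_ne_top Γ z), mul_one]
  refine ext_of_generate_finite cylFam generate_cylFam isPiSystem_cylFam ?_ ?_
  · rintro _ ⟨Δ, y, rfl⟩
    rw [Measure.map_apply (measurable_replE Γ z) (measurableSet_cylE Δ y),
      Measure.restrict_apply (measurable_replE Γ z (measurableSet_cylE Δ y)),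
      Measure.smul_apply, Measure.restrict_apply (measurableSet_cylE Δ y), smul_eq_mul]
    by_cases hagree : ∀ i ∈ Δ, i ∈ Γ → z i = y i
    · have hL : replE Γ z ⁻¹' cylE Δ y ∩ cylE Γ z'
          = cylE (Γ ∪ Δ) (fun i => if i ∈ Γ then z' i else y i) := by
        ext x
        simp only [Set.mem_inter_iff, Set.mem_preimage, cylE, Set.mem_setOf_eq,
          Finset.mem_union, replE]
        constructor
        · rintro ⟨h1, h2⟩ i hi
          by_cases hiΓ : i ∈ Γ
          · simp only [hiΓ, if_true]; exact h2 i hiΓ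
          · rcases hi with hi | hi
            · exact absurd hiΓ (fun _ => hiΓ hi)
            · have := h1 i hi; simp only [hiΓ, if_false] at this ⊢; exact this
        · intro h
          constructor
          · intro i hi
            by_cases hiΓ : i ∈ Γ
            · simp only [hiΓ, if_true]; exact hagree i hi hiΓ
            · have := h i (Or.inr hi); simp only [hiΓ, if_false] at this ⊢; exact this
          · intro i hi
            have := h i (Or.inl hi); simp only [hi, if_true] at this; exact this
      have hR : cylE Δ y ∩ cylE Γ z
          = cylE (Γ ∪ Δ) (fun i => if i ∈ Γ then z i else y i) := by
        ext x
        simp only [Set.mem_inter_iff, cylE, Set.mem_setOf_eq, Finset.mem_union]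
        constructor
        · rintro ⟨h1, h2⟩ i hi
          by_cases hiΓ : i ∈ Γ
          · simp only [hiΓ, if_true]; exact h2 i hiΓ
          · rcases hi with hi | hi
            · exact absurd hiΓ (fun _ => hiΓ hi)
            · simp only [hiΓ, if_false]; exact h1 i hi
        · intro h
          constructor
          · intro i hi
            have := h i (Or.inr hi)
            by_cases hiΓ : i ∈ Γ
            · simp only [hiΓ, if_true] at this; rw [this, ← hagree i hi hiΓ]
            · simpa only [hiΓ, if_false] using this
          · intro i hi
            have := h i (Or.inl hi); simpa only [hi, if_true] using this
      have hsplit : ∀ q : XX, ∏ i ∈ Γ ∪ Δ, w i ((fun j => if j ∈ Γ then q j else y j) i)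
          = (∏ i ∈ Γ, w i (q i)) * ∏ i ∈ Δ \ Γ, w i (y i) := by
        intro q
        rw [← Finset.union_sdiff_self_eq_union,
          Finset.prod_union Finset.disjoint_sdiff]
        congr 1
        · exact Finset.prod_congr rfl fun i hi => by simp [hi]
        · refine Finset.prod_congr rfl fun i hi => ?_
          have : i ∉ Γ := (Finset.mem_sdiff.mp hi).2
          simp [this]
      rw [hL, hR, meas_cylE hμ, meas_cylE hμ, hsplit z', hsplit z, ← mul_assoc, hcancel]
    · push_neg at hagree
      obtain ⟨i0, hi0Δ, hi0Γ, hne⟩ := hagree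
      have hL : replE Γ z ⁻¹' cylE Δ y ∩ cylE Γ z' = ∅ := by
        ext x
        simp only [Set.mem_inter_iff, Set.mem_preimage, cylE, Set.mem_setOf_eq,
          Set.mem_empty_iff_false, iff_false, not_and]
        intro h1 _
        have := h1 i0 hi0Δ
        simp only [replE, hi0Γ, if_true] at this
        exact hne this
      have hR : cylE Δ y ∩ cylE Γ z = ∅ := by
        ext x
        simp only [Set.mem_inter_iff, cylE, Set.mem_setOf_eq,
          Set.mem_empty_iff_false, iff_false, not_and]
        intro h1 h2
        exact hne ((h2 i0 hi0Γ).symm.trans (h1 i0 hi0Δ))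
      rw [hL, hR]; simp
  · rw [Measure.map_apply (measurable_replE Γ z) MeasurableSet.univ,
      Set.preimage_univ, Measure.restrict_apply_univ, Measure.smul_apply,
      Measure.restrict_apply_univ, smul_eq_mul, meas_cylE hμ, meas_cylE hμ, hcancel]

lemma key {μ : Measure XX} (hμ : IsProductMeasure μ) (Γ : Finset ℕ) (z z' : XX)
    (B : Set XX) (hB : MeasurableSet B) (hBz : B ⊆ cylE Γ z) :
    μ (replE Γ z' '' B) = (∏ i ∈ Γ, w i (z' i)) * (∏ i ∈ Γ, w i (z i))⁻¹ * μ B := by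
  have h1 := congrArg (fun ν : Measure XX => ν B) (key_map hμ Γ z z')
  simp only [Measure.map_apply (measurable_replE Γ z) hB,
    Measure.restrict_apply ((measurable_replE Γ z) hB), Measure.smul_apply,
    Measure.restrict_apply hB, smul_eq_mul] at h1
  rw [image_replE Γ z z' B hBz, h1, Set.inter_eq_self_of_subset_left hBz]

/-- type-1 piece data -/
noncomputable def z1 (v : Xc 0) : XX := Function.update (fun i => (0 : Xc i)) 0 v

lemma T_eq_on_P1 (v : Xc 0) (hv : 1 ≤ (v : ℕ) ∧ (v : ℕ) ≤ 4) (y : XX)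
    (hy : y ∈ cylE {0} (z1 v)) :
    T y = replE {0} (z1 (v + 1)) y := by
  have h0 : y 0 = v := by
    have := hy 0 (Finset.mem_singleton_self 0)
    simpa [z1] using this
  rw [T, if_pos (by rw [h0]; exact hv)]
  funext i
  by_cases hi : i = 0
  · subst hi
    simp [replE, z1, h0]
  · simp [replE, z1, Function.update_of_ne hi, hi]

/-- type-2 piece data -/
noncomputable def z2 (N : ℕ) (v0 : Xc 0) (m : Xc N) : XX :=
  Function.update (Function.update (fun i => Fin.last (5 ^ (i + 1))) 0 v0) N m

noncomputable def aval (N : ℕ) (v0 : Xc 0) (m : Xc N) : Xc 0 :=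
  ⟨((∑ j ∈ Finset.range (N + 1), par j (z2 N v0 m j)) + 1) % 2, by
    have := Nat.mod_lt ((∑ j ∈ Finset.range (N + 1), par j (z2 N v0 m j)) + 1) (show 0 < 2 by norm_num)
    omega⟩

noncomputable def z2' (N : ℕ) (v0 : Xc 0) (m : Xc N) : XX :=
  Function.update (Function.update (fun i => (0 : Xc i)) 0 (aval N v0 m)) N (m + 1)

lemma z2_zero (N : ℕ) (hN : 1 ≤ N) (v0 : Xc 0) (m : Xc N) : z2 N v0 m 0 = v0 := by
  rw [z2, Function.update_of_ne (by omega), Function.update_self]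

lemma z2_N (N : ℕ) (v0 : Xc 0) (m : Xc N) : z2 N v0 m N = m := by
  rw [z2, Function.update_self]

lemma z2_mid (N : ℕ) (v0 : Xc 0) (m : Xc N) (j : ℕ) (h1 : 1 ≤ j) (h2 : j ≠ N) :
    z2 N v0 m j = Fin.last (5 ^ (j + 1)) := by
  rw [z2, Function.update_of_ne h2, Function.update_of_ne (by omega)]

lemma T_eq_on_P2 (N : ℕ) (hN : 1 ≤ N) (v0 : Xc 0) (hv0 : ¬(1 ≤ (v0 : ℕ) ∧ (v0 : ℕ) ≤ 4))
    (m : Xc N) (hm : (m : ℕ) < 5 ^ (N + 1)) (y : XX)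
    (hy : y ∈ cylE (Finset.range (N + 1)) (z2 N v0 m)) :
    T y = replE (Finset.range (N + 1)) (z2' N v0 m) y := by
  have hy' : ∀ j ≤ N, y j = z2 N v0 m j := fun j hj => hy j (Finset.mem_range.mpr (by omega))
  have h0 : y 0 = v0 := by rw [hy' 0 (by omega), z2_zero N hN]
  have hyN : y N = m := by rw [hy' N le_rfl, z2_N]
  have hex : ∃ i, 1 ≤ i ∧ (y i : ℕ) < 5 ^ (i + 1) := ⟨N, hN, by rw [hyN]; exact hm⟩
  have hfind : Nat.find hex = N := by
    rw [Nat.find_eq_iff]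
    refine ⟨⟨hN, by rw [hyN]; exact hm⟩, fun j hj => ?_⟩
    rintro ⟨hj1, hj2⟩
    rw [hy' j (by omega), z2_mid N v0 m j hj1 (by omega)] at hj2
    simp at hj2
  rw [T, if_neg (by rw [h0]; exact hv0), dif_pos hex]
  funext i
  simp only [hfind]
  by_cases hi0 : i = 0
  · subst hi0
    rw [if_pos rfl]
    have hmem : (0 : ℕ) ∈ Finset.range (N + 1) := Finset.mem_range.mpr (by omega)
    rw [replE]
    simp only [hmem, if_true]
    rw [z2', Function.update_of_ne (by omega), Function.update_self, aval]
    have hsum : ∑ j ∈ Finset.range (N + 1), par j (y j)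
        = ∑ j ∈ Finset.range (N + 1), par j (z2 N v0 m j) :=
      Finset.sum_congr rfl fun j hj => by rw [hy' j (by simpa using Nat.lt_succ_iff.mp (Finset.mem_range.mp hj))]
    exact Fin.ext (by simp [hsum])
  · rw [if_neg hi0]
    by_cases hilt : i < N
    · rw [if_pos hilt]
      have hmem : i ∈ Finset.range (N + 1) := Finset.mem_range.mpr (by omega)
      rw [replE]
      simp only [hmem, if_true]
      rw [z2', Function.update_of_ne (by omega), Function.update_of_ne hi0]
    · rw [if_neg hilt]
      by_cases hiN : i = N
      · subst hiN
        rw [dif_pos rfl]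
        have hmem : i ∈ Finset.range (i + 1) := Finset.mem_range.mpr (by omega)
        rw [replE]
        simp only [hmem, if_true]
        rw [z2', Function.update_self]
        refine eq_of_heq ((cast_heq _ _).trans ?_)
        have hgen : ∀ (n : ℕ), n = i → HEq (y n + 1) (m + 1) := by
          rintro n rfl
          rw [hyN]
        exact hgen _ hfind
      · rw [dif_neg hiN]
        have hmem : i ∉ Finset.range (N + 1) := by simp; omega
        rw [replE]
        simp only [hmem, if_false]

abbrev Idx : Type := (Xc 0) ⊕ ((N : ℕ) × (Xc 0 × Xc N))

open Classical in
noncomputable def piece : Idx → Set XX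
  | .inl v => if 1 ≤ (v : ℕ) ∧ (v : ℕ) ≤ 4 then cylE {0} (z1 v) else ∅
  | .inr ⟨N, v0, m⟩ =>
      if 1 ≤ N ∧ ¬(1 ≤ (v0 : ℕ) ∧ (v0 : ℕ) ≤ 4) ∧ (m : ℕ) < 5 ^ (N + 1)
      then cylE (Finset.range (N + 1)) (z2 N v0 m) else ∅

lemma measurableSet_piece (i : Idx) : MeasurableSet (piece i) := by
  rcases i with v | ⟨N, v0, m⟩ <;> simp only [piece] <;> split
  exacts [measurableSet_cylE _ _, MeasurableSet.empty, measurableSet_cylE _ _,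
    MeasurableSet.empty]

lemma cyl_null {μ : Measure XX} (hμ : IsProductMeasure μ) (Γ : Finset ℕ) (z z' : XX)
    (B : Set XX) (hB : MeasurableSet B) (hBz : B ⊆ cylE Γ z)
    (hT : ∀ y ∈ cylE Γ z, T y = replE Γ z' y) : μ B = 0 ↔ μ (T '' B) = 0 := by
  have himg : T '' B = replE Γ z' '' B :=
    Set.image_congr fun y hy => hT y (hBz hy)
  rw [himg, key hμ Γ z z' B hB hBz]
  have hc : (∏ i ∈ Γ, w i (z' i)) * (∏ i ∈ Γ, w i (z i))⁻¹ ≠ 0 :=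
    mul_ne_zero (W_ne_zero Γ z') (ENNReal.inv_ne_zero.mpr (W_ne_top Γ z))
  constructor
  · intro h; rw [h, mul_zero]
  · intro h; exact (mul_eq_zero.mp h).resolve_left hc

lemma piece_null {μ : Measure XX} (hμ : IsProductMeasure μ) (B : Set XX)
    (hB : MeasurableSet B) (i : Idx) (hBp : B ⊆ piece i) : μ B = 0 ↔ μ (T '' B) = 0 := by
  rcases i with v | ⟨N, v0, m⟩ <;> simp only [piece] at hBp
  · by_cases hv : 1 ≤ (v : ℕ) ∧ (v : ℕ) ≤ 4
    · rw [if_pos hv] at hBp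
      exact cyl_null hμ _ _ _ B hB hBp (T_eq_on_P1 v hv)
    · rw [if_neg hv, Set.subset_empty_iff] at hBp
      subst hBp; simp
  · by_cases hc : 1 ≤ N ∧ ¬(1 ≤ (v0 : ℕ) ∧ (v0 : ℕ) ≤ 4) ∧ (m : ℕ) < 5 ^ (N + 1)
    · rw [if_pos hc] at hBp
      exact cyl_null hμ _ _ _ B hB hBp (T_eq_on_P2 N hc.1 v0 hc.2.1 m hc.2.2)
    · rw [if_neg hc, Set.subset_empty_iff] at hBp
      subst hBp; simp

lemma cover : G ⊆ ⋃ i : Idx, piece i := by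
  intro x hx
  by_cases h1 : 1 ≤ (x 0 : ℕ) ∧ (x 0 : ℕ) ≤ 4
  · refine Set.mem_iUnion.mpr ⟨.inl (x 0), ?_⟩
    simp only [piece]
    rw [if_pos h1]
    intro j hj
    rw [Finset.mem_singleton] at hj
    subst hj
    simp [z1]
  · have hex : ∃ i, 1 ≤ i ∧ (x i : ℕ) < 5 ^ (i + 1) := by
      obtain ⟨i, hi⟩ := hx.1.nonempty
      exact ⟨i, hi⟩
    have hspec := Nat.find_spec hex
    refine Set.mem_iUnion.mpr ⟨.inr ⟨Nat.find hex, x 0, x (Nat.find hex)⟩, ?_⟩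
    simp only [piece]
    rw [if_pos ⟨hspec.1, h1, hspec.2⟩]
    intro j hj
    rw [Finset.mem_range, Nat.lt_succ_iff] at hj
    by_cases hj0 : j = 0
    · subst hj0
      rw [z2_zero _ hspec.1]
    · by_cases hjN : j = Nat.find hex
      · subst hjN
        rw [z2_N]
      · have hjlt : j < Nat.find hex := lt_of_le_of_ne hj hjN
        have hmin := Nat.find_min hex hjlt
        push_neg at hmin
        have h5 : 5 ^ (j + 1) ≤ (x j : ℕ) := hmin (by omega)
        rw [z2_mid _ _ _ j (by omega) hjN]
        exact Fin.ext (by simpa [Fin.val_last] using le_antisymm (Fin.is_le (x j)) h5)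


theorem statement11 (μ : Measure XX) (hμ : IsProductMeasure μ)
    (A : Set XX) (hA : MeasurableSet A) (hAG : A ⊆ G) :
    μ A = 0 ↔ μ (T '' A) = 0 := by
  have hAeq : A = ⋃ i : Idx, A ∩ piece i := by
    rw [← Set.inter_iUnion]
    exact (Set.inter_eq_self_of_subset_left fun x hx => cover (hAG hx)).symm
  have hTA : T '' A = ⋃ i : Idx, T '' (A ∩ piece i) := by
    conv_lhs => rw [hAeq]
    exact Set.image_iUnion
  have hper : ∀ i : Idx, (μ (A ∩ piece i) = 0 ↔ μ (T '' (A ∩ piece i)) = 0) := fun i =>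
    piece_null hμ _ (hA.inter (measurableSet_piece i)) i Set.inter_subset_right
  constructor
  · intro h
    rw [hTA]
    refine le_antisymm (le_trans (measure_iUnion_le _) ?_) zero_le
    have h0 : ∀ i : Idx, μ (T '' (A ∩ piece i)) = 0 := fun i =>
      (hper i).mp (le_antisymm (le_trans (measure_mono Set.inter_subset_left) h.le) zero_le)
    simp [h0]
  · intro h
    rw [hAeq]
    refine le_antisymm (le_trans (measure_iUnion_le _) ?_) zero_le
    have h0 : ∀ i : Idx, μ (A ∩ piece i) = 0 := fun i =>
      (hper i).mpr (le_antisymm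
        (le_trans (measure_mono (Set.image_mono Set.inter_subset_left)) h.le) zero_le)
    simp [h0]
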